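/- (Proposition 3, non-singularity of the pilot-based PPM FIM.) Assume D ≥ 1, P + D ≥ 2 and T_f ≠ 0. Then the matrix J_{ppm,p} has trivial kernel (full column rank). Consequently, for every Hermitian positive definite complex matrix M indexed by (Fin L) ⊕ (Fin L) ⊕ (Fin (P+D) × Fin L) ⊕ (Fin L) ⊕ (Fin L), the matrix J_{ppm,p}ᵀ · M · J_{ppm,p} (equal to J_{ppm,p}ᴴ · M · J_{ppm,p} since J_{ppm,p} has real entries) is Hermitian positive definite, and in particular invertible: pilots decouple the data from the sensing parameters. -/

import Mathlib

open Matrix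
open scoped ComplexOrder

noncomputable section

/-- The matrix `H`: first column all ones, agreeing with the identity elsewhere. -/
def Hmat (L : ℕ) : Matrix (Fin L) (Fin L) ℂ :=
  Matrix.of fun i j => if j.val = 0 ∨ i = j then 1 else 0

/-- The all-ones column vector `E` of length `L`. -/
def Emat (L : ℕ) : Matrix (Fin L) (Fin 1) ℂ :=
  Matrix.of fun _ _ => 1

/-- Index of the observation vector in the pilot-based systems:
pilot delays, data delays, phases, pilot amplitudes, data amplitudes. -/
abbrev PIdx (L P D : ℕ) :=
  Fin L ⊕ Fin L ⊕ (Fin (P + D) × Fin L) ⊕ Fin L ⊕ Fin L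

/-- The Jacobian matrix of the pilot-based PPM ISAC case: row blocks `[H, 0, 0, 0]` for the
pilot delays, `[H, E, 0, 0]` for the data delays, `[0, 0, (2πκT_f)·H, 0]` for the phases,
`[0, 0, 0, I_L]` for the pilot and data amplitudes. -/
def JppmP (L P D : ℕ) (Tf : ℝ) :
    Matrix (PIdx L P D) (Fin L ⊕ Fin 1 ⊕ Fin L ⊕ Fin L) ℂ :=
  Matrix.of fun i j =>
    match i, j with
    | Sum.inl a, Sum.inl b => Hmat L a b
    | Sum.inr (Sum.inl a), Sum.inl b => Hmat L a b
    | Sum.inr (Sum.inl a), Sum.inr (Sum.inl b) => Emat L a b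
    | Sum.inr (Sum.inr (Sum.inl (κ, a))), Sum.inr (Sum.inr (Sum.inl b)) =>
        ((2 * Real.pi * (κ.1 : ℝ) * Tf : ℝ) : ℂ) * Hmat L a b
    | Sum.inr (Sum.inr (Sum.inr (Sum.inl a))), Sum.inr (Sum.inr (Sum.inr b)) =>
        (1 : Matrix (Fin L) (Fin L) ℂ) a b
    | Sum.inr (Sum.inr (Sum.inr (Sum.inr a))), Sum.inr (Sum.inr (Sum.inr b)) =>
        (1 : Matrix (Fin L) (Fin L) ℂ) a b
    | _, _ => 0

lemma Hmat_mulVec_eq_zero {L : ℕ} (hL : 1 ≤ L) (u : Fin L → ℂ)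
    (h : (Hmat L).mulVec u = 0) : u = 0 := by
  set z : Fin L := ⟨0, hL⟩ with hz
  have key : ∀ i : Fin L, (Hmat L).mulVec u i =
      u z + (if i = z then 0 else u i) := by
    intro i
    by_cases hi : i = z
    · subst hi
      have : ∀ j : Fin L, Hmat L z j * u j = if j = z then u j else 0 := by
        intro j
        by_cases hj : j = z
        · subst hj; simp [Hmat]
        · have hj0 : ¬ (j : ℕ) = 0 := fun h0 => hj (Fin.ext h0)
          have hzj : ¬ z = j := fun h0 => hj h0.symm
          simp [Hmat, hj0, hzj, hj]
      simp [Matrix.mulVec, dotProduct, this]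
    · have : ∀ j : Fin L, Hmat L i j * u j =
          (if j = z then u j else 0) + (if j = i then u j else 0) := by
        intro j
        by_cases hj : j = z
        · subst hj
          have h1 : ¬ z = i := fun h0 => hi h0.symm
          simp [Hmat, hi, h1]
          exact fun h0 => absurd rfl h0
        · have hj0 : ¬ (j : ℕ) = 0 := fun h0 => hj (Fin.ext h0)
          by_cases hji : j = i
          · subst hji; simp [Hmat, hj0, hj]
          · have : ¬ i = j := fun h0 => hji h0.symm
            simp [Hmat, hj0, this, hji, hj]
      simp [Matrix.mulVec, dotProduct, this, Finset.sum_add_distrib, hi]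
  have hz0 : u z = 0 := by
    have := congrFun h z
    rw [key z] at this
    simpa using this
  funext i
  by_cases hi : i = z
  · simpa [hi] using hz0
  · have := congrFun h i
    rw [key i] at this
    simp only [hi, if_neg, hz0, zero_add, Pi.zero_apply] at this
    simpa using this

/-- Proposition 3, non-singularity of the pilot-based PPM FIM: `J_{ppm,p}` has trivial kernel,
and for every Hermitian positive definite `M` the matrix `J_{ppm,p}ᵀ · M · J_{ppm,p}` is
Hermitian positive definite, in particular invertible. -/
theorem ppm_pilot_fim_nonsingular (L P D : ℕ) (hL : 1 ≤ L) (hD : 1 ≤ D) (hPD : 2 ≤ P + D)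
    (Tf : ℝ) (hTf : Tf ≠ 0) :
    (∀ v : (Fin L ⊕ Fin 1 ⊕ Fin L ⊕ Fin L) → ℂ,
        (JppmP L P D Tf).mulVec v = 0 → v = 0) ∧
      ∀ M : Matrix (PIdx L P D) (PIdx L P D) ℂ, M.PosDef →
        ((JppmP L P D Tf)ᵀ * M * JppmP L P D Tf).PosDef ∧
          IsUnit ((JppmP L P D Tf)ᵀ * M * JppmP L P D Tf) := by
  have hker : ∀ v : (Fin L ⊕ Fin 1 ⊕ Fin L ⊕ Fin L) → ℂ,
      (JppmP L P D Tf).mulVec v = 0 → v = 0 := by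
    intro v hv
    set a : Fin L → ℂ := fun b => v (Sum.inl b) with ha
    set c : Fin L → ℂ := fun b => v (Sum.inr (Sum.inr (Sum.inl b))) with hc
    set d : Fin L → ℂ := fun b => v (Sum.inr (Sum.inr (Sum.inr b))) with hd
    -- pilot delay rows give H a = 0
    have hrow1 : ∀ i : Fin L, (Hmat L).mulVec a i = 0 := by
      intro i
      have := congrFun hv (Sum.inl i)
      simpa [JppmP, Matrix.mulVec, dotProduct, Fintype.sum_sum_type] using this
    have haz : a = 0 := Hmat_mulVec_eq_zero hL a (funext hrow1)
    -- data delay rows give E b = 0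
    have hb : v (Sum.inr (Sum.inl 0)) = 0 := by
      set z : Fin L := ⟨0, hL⟩
      have := congrFun hv (Sum.inr (Sum.inl z))
      have h2 : (Hmat L).mulVec a z + v (Sum.inr (Sum.inl 0)) = 0 := by
        simpa [JppmP, Emat, Matrix.mulVec, dotProduct, Fintype.sum_sum_type] using this
      rw [hrow1 z] at h2
      simpa using h2
    -- phase rows with κ = 1 give H c = 0
    have hrow3 : ∀ i : Fin L, ((2 * Real.pi * Tf : ℝ) : ℂ) * (Hmat L).mulVec c i = 0 := by
      intro i
      have h1 : (1 : ℕ) < P + D := lt_of_lt_of_le one_lt_two hPD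
      have := congrFun hv (Sum.inr (Sum.inr (Sum.inl (⟨1, h1⟩, i))))
      have h2 : ∑ b : Fin L, ((2 * Real.pi * (1 : ℝ) * Tf : ℝ) : ℂ) * Hmat L i b * c b = 0 := by
        simpa [JppmP, Matrix.mulVec, dotProduct, Fintype.sum_sum_type] using this
      have h3 : ((2 * Real.pi * Tf : ℝ) : ℂ) * ∑ b : Fin L, Hmat L i b * c b = 0 := by
        rw [Finset.mul_sum]
        simpa [mul_assoc, mul_comm, mul_left_comm] using h2
      simpa [Matrix.mulVec, dotProduct] using h3
    have hcoef : ((2 * Real.pi * Tf : ℝ) : ℂ) ≠ 0 := by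
      simp only [ne_eq, Complex.ofReal_eq_zero]
      positivity
    have hcz : c = 0 := by
      refine Hmat_mulVec_eq_zero hL c (funext fun i => ?_)
      have := hrow3 i
      rcases mul_eq_zero.mp this with h | h
      · exact absurd h hcoef
      · simpa using h
    -- amplitude rows give d = 0
    have hdz : ∀ i : Fin L, d i = 0 := by
      intro i
      have := congrFun hv (Sum.inr (Sum.inr (Sum.inr (Sum.inl i))))
      simpa [JppmP, Matrix.mulVec, dotProduct, Fintype.sum_sum_type,
        Matrix.one_apply] using this
    funext x
    rcases x with b | b | b | b
    · exact congrFun haz b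
    · have : b = 0 := Subsingleton.elim b 0
      rw [this]; exact hb
    · exact congrFun hcz b
    · exact hdz b
  refine ⟨hker, fun M hM => ?_⟩
  have hreal : (JppmP L P D Tf)ᵀ = (JppmP L P D Tf)ᴴ := by
    ext j i
    simp only [Matrix.transpose_apply, Matrix.conjTranspose_apply]
    rcases i with a | a | ⟨κ, a⟩ | a | a <;> rcases j with b | b | b | b <;>
      simp [JppmP, Hmat, Emat, Matrix.one_apply, apply_ite (starRingEnd ℂ), map_ofNat, _root_.map_mul, Complex.conj_ofReal]
  have hPD' : ((JppmP L P D Tf)ᴴ * M * JppmP L P D Tf).PosDef := by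
    refine Matrix.PosDef.of_dotProduct_mulVec_pos (Matrix.isHermitian_conjTranspose_mul_mul _ hM.1) fun x hx => ?_
    have hJx : (JppmP L P D Tf).mulVec x ≠ 0 := by
      intro h
      exact hx (hker x h)
    have := hM.dotProduct_mulVec_pos hJx
    simpa only [star_mulVec, dotProduct_mulVec, Matrix.vecMul_vecMul] using this
  rw [hreal]
  exact ⟨hPD', hPD'.isUnit⟩
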